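/- Let F : ℝ₊^D → ℝ₊^D be order preserving and positively homogeneous of degree 1. If λ > 0 and U ∈ int ℝ₊^D satisfy F(U) = λ U, then for every d ∈ D the limit lim_{k→∞} ((F^k(e))_d)^{1/k} exists and equals λ. In particular, the per-coordinate growth rate of F^k(e) is the same for every coordinate. -/

import Mathlib

open Filter

private lemma aux_tendsto_rpow {c lam : ℝ} (hc : 0 < c) (hlam : 0 < lam) :
    Tendsto (fun k : ℕ => (c * lam ^ k) ^ ((1 : ℝ) / k)) atTop (nhds lam) := by
  have h1 : Tendsto (fun k : ℕ => (1 : ℝ) / k) atTop (nhds 0) :=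
    tendsto_one_div_atTop_nhds_zero_nat
  have h2 : Tendsto (fun k : ℕ => c ^ ((1 : ℝ) / k)) atTop (nhds 1) := by
    have hcont : ContinuousAt (fun x : ℝ => c ^ x) 0 :=
      Real.continuousAt_const_rpow hc.ne'
    have := hcont.tendsto.comp h1
    simpa [Function.comp_def] using this
  have h3 : Tendsto (fun k : ℕ => c ^ ((1 : ℝ) / k) * lam) atTop (nhds lam) := by
    simpa using h2.mul tendsto_const_nhds
  refine h3.congr' ?_
  filter_upwards [eventually_ge_atTop 1] with k hk
  have hk0 : (k : ℝ) ≠ 0 := by positivity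
  rw [Real.mul_rpow hc.le (by positivity), ← Real.rpow_natCast lam k,
    ← Real.rpow_mul hlam.le]
  congr 1
  field_simp
  simp

/-- If F is order preserving and positively homogeneous of degree 1
on ℝ₊^D and F(U) = λU for some λ > 0 and positive vector U, then for every
coordinate d, lim_k ((F^k e)_d)^{1/k} exists and equals λ; in particular the
per-coordinate growth rate is the same for every coordinate. -/
theorem growth_rate_eq_of_posEigen
    {D : Type*} [Fintype D] [Nonempty D]
    (F : (D → ℝ) → (D → ℝ))
    (hmaps : ∀ X : D → ℝ, (∀ d, 0 ≤ X d) → ∀ d, 0 ≤ F X d)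
    (hmono : ∀ X Y : D → ℝ, (∀ d, 0 ≤ X d) → (∀ d, 0 ≤ Y d) →
      (∀ d, X d ≤ Y d) → ∀ d, F X d ≤ F Y d)
    (hhom : ∀ (c : ℝ), 0 < c → ∀ X : D → ℝ, (∀ d, 0 ≤ X d) →
      F (c • X) = c • F X)
    (lam : ℝ) (hlam : 0 < lam) (U : D → ℝ) (hU : ∀ d, 0 < U d)
    (heig : ∀ d, F U d = lam * U d) :
    ∀ d : D, Tendsto (fun k : ℕ => (F^[k] (fun _ => 1) d) ^ ((1 : ℝ) / k))
      atTop (nhds lam) := by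
  set e : D → ℝ := fun _ => 1 with he
  -- min and max of U
  obtain ⟨dm, -, hdm⟩ := Finset.exists_min_image Finset.univ U ⟨Classical.arbitrary D, Finset.mem_univ _⟩
  obtain ⟨dM, -, hdM⟩ := Finset.exists_max_image Finset.univ U ⟨Classical.arbitrary D, Finset.mem_univ _⟩
  set m : ℝ := U dm with hm
  set M : ℝ := U dM with hM
  have hm0 : 0 < m := hU dm
  have hM0 : 0 < M := hU dM
  have hmle : ∀ d, m ≤ U d := fun d => hdm d (Finset.mem_univ d)
  have hleM : ∀ d, U d ≤ M := fun d => hdM d (Finset.mem_univ d)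
  -- eigen-equation in smul form
  have heigc : ∀ c : ℝ, 0 < c → F (c • U) = (c * lam) • U := by
    intro c hc
    rw [hhom c hc U (fun d => (hU d).le)]
    funext d
    simp [heig d, mul_assoc]
  -- iterates of c • U
  have hiter : ∀ c : ℝ, 0 < c → ∀ k : ℕ, F^[k] (c • U) = (c * lam ^ k) • U := by
    intro c hc k
    induction k with
    | zero => simp
    | succ n ih =>
        rw [Function.iterate_succ_apply', ih, heigc _ (by positivity)]
        congr 1
        ring
  -- nonnegativity of iterates
  have hnn : ∀ k : ℕ, ∀ X : D → ℝ, (∀ d, 0 ≤ X d) → ∀ d, 0 ≤ F^[k] X d := by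
    intro k
    induction k with
    | zero => intro X hX; simpa using hX
    | succ n ih =>
        intro X hX d
        rw [Function.iterate_succ_apply']
        exact hmaps _ (ih X hX) d
  -- monotonicity of iterates
  have hmonoI : ∀ k : ℕ, ∀ X Y : D → ℝ, (∀ d, 0 ≤ X d) → (∀ d, 0 ≤ Y d) →
      (∀ d, X d ≤ Y d) → ∀ d, F^[k] X d ≤ F^[k] Y d := by
    intro k
    induction k with
    | zero => intro X Y _ _ h; simpa using h
    | succ n ih =>
        intro X Y hX hY h d
        rw [Function.iterate_succ_apply', Function.iterate_succ_apply']
        exact hmono _ _ (hnn n X hX) (hnn n Y hY) (ih X Y hX hY h) d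
  have heNN : ∀ d : D, (0:ℝ) ≤ e d := fun d => by simp [he]
  have hlowv : ∀ d, (1/M) * U d ≤ e d := fun d => by
    rw [he]
    simp only
    rw [div_mul_eq_mul_div, one_mul, div_le_one hM0]
    exact hleM d
  have hhighv : ∀ d, e d ≤ (1/m) * U d := fun d => by
    rw [he]
    simp only
    rw [div_mul_eq_mul_div, one_mul, le_div_iff₀ hm0, one_mul]
    exact hmle d
  -- bounds on iterates at e
  have hlow : ∀ k d, (1/M * lam ^ k) * U d ≤ F^[k] e d := by
    intro k d
    have := hmonoI k ((1/M) • U) e (fun d => by simp only [Pi.smul_apply, smul_eq_mul]; exact mul_nonneg (by positivity) (hU d).le) heNN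
      (fun d => by simpa using hlowv d) d
    rwa [hiter (1/M) (by positivity) k] at this
  have hhigh : ∀ k d, F^[k] e d ≤ (1/m * lam ^ k) * U d := by
    intro k d
    have := hmonoI k e ((1/m) • U) heNN (fun d => by simp only [Pi.smul_apply, smul_eq_mul]; exact mul_nonneg (by positivity) (hU d).le)
      (fun d => by simpa using hhighv d) d
    rwa [hiter (1/m) (by positivity) k] at this
  intro d
  have hUd := hU d
  have hltend : Tendsto (fun k : ℕ => ((U d / M) * lam ^ k) ^ ((1:ℝ)/k)) atTop (nhds lam) :=
    aux_tendsto_rpow (by positivity) hlam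
  have hhtend : Tendsto (fun k : ℕ => ((U d / m) * lam ^ k) ^ ((1:ℝ)/k)) atTop (nhds lam) :=
    aux_tendsto_rpow (by positivity) hlam
  refine tendsto_of_tendsto_of_tendsto_of_le_of_le hltend hhtend ?_ ?_
  · intro k
    apply Real.rpow_le_rpow (by positivity) _ (by positivity)
    have := hlow k d
    calc U d / M * lam ^ k = 1/M * lam ^ k * U d := by ring
      _ ≤ F^[k] e d := this
  · intro k
    apply Real.rpow_le_rpow (hnn k e heNN d) _ (by positivity)
    have := hhigh k d
    calc F^[k] e d ≤ 1/m * lam ^ k * U d := this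
      _ = U d / m * lam ^ k := by ring
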